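/- Let Y ∼ N(μ, σ₊²) and let w(y) = Ψ(g(y))/Ψ(h) with g(y) = (σ₊² f* − σn² μ − σx² y)/(σx σn σ₊), h = (f* − μ)/σx, σ₊² = σx² + σn², σx, σn > 0. Then E[w(Y)] = 1. -/

import Mathlib

open MeasureTheory ProbabilityTheory Real
open Filter

/-- Gaussian density N(z; m, s²). -/
noncomputable def gauss (m s2 z : ℝ) : ℝ :=
  (Real.sqrt (2 * Real.pi * s2))⁻¹ * Real.exp (-(z - m) ^ 2 / (2 * s2))

/-- Standard Gaussian density ψ. -/
noncomputable def stdPdf (t : ℝ) : ℝ := gauss 0 1 t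

/-- Standard Gaussian CDF Ψ. -/
noncomputable def stdCdf (t : ℝ) : ℝ := ∫ u in Set.Iic t, stdPdf u


lemma gauss_nonneg (m v z : ℝ) : 0 ≤ gauss m v z := by
  unfold gauss; positivity

lemma gauss_exp (m v z : ℝ) (hv : 0 < v) :
    Real.exp (-(z - m) ^ 2 / (2 * v)) = Real.exp (-(2*v)⁻¹ * (z - m)^2) := by
  congr 1; field_simp

lemma integrable_gauss (m v : ℝ) (hv : 0 < v) : Integrable (gauss m v) := by
  unfold gauss
  apply Integrable.const_mul
  simp_rw [gauss_exp m v _ hv]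
  exact (integrable_exp_neg_mul_sq (by positivity)).comp_sub_right m

lemma integral_gauss (m v : ℝ) (hv : 0 < v) : ∫ z, gauss m v z = 1 := by
  unfold gauss
  rw [integral_const_mul]
  simp_rw [gauss_exp m v _ hv]
  rw [show (∫ z : ℝ, Real.exp (-(2*v)⁻¹ * (z - m)^2))
      = ∫ z : ℝ, (fun x => Real.exp (-(2*v)⁻¹ * x^2)) (z - m) from rfl,
    integral_sub_right_eq_self (fun x => Real.exp (-(2*v)⁻¹ * x^2)) m,
    integral_gaussian]
  rw [show π / (2*v)⁻¹ = 2 * π * v by field_simp]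
  rw [inv_mul_cancel₀]
  positivity

lemma mul_exp_helper (c1 c2 d1 d2 e1 e2 f1 f2 : ℝ) (hc : c1 * c2 = d1 * d2)
    (he : e1 + e2 = f1 + f2) :
    c1 * Real.exp e1 * (c2 * Real.exp e2) = d1 * Real.exp f1 * (d2 * Real.exp f2) := by
  rw [mul_mul_mul_comm, ← Real.exp_add, mul_mul_mul_comm d1, ← Real.exp_add, hc, he]

lemma key_identity (μ σx σn sp s y : ℝ) (hσx : 0 < σx) (hσn : 0 < σn)
    (hsp : 0 < sp) (hsp2 : sp ^ 2 = σx ^ 2 + σn ^ 2) :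
    gauss μ (σx ^ 2 + σn ^ 2) y *
      ((sp / σn) * stdPdf ((sp / σn) * s + -(σx * (y - μ) / (sp * σn)))) =
    stdPdf s * gauss (μ + σx * s) (σn ^ 2) y := by
  have h2π : (0:ℝ) < 2 * π := by positivity
  unfold stdPdf gauss
  rw [mul_one, ← hsp2]
  rw [show Real.sqrt (2 * π * sp ^ 2) = Real.sqrt (2 * π) * sp by
    rw [Real.sqrt_mul h2π.le, Real.sqrt_sq hsp.le]]
  rw [show Real.sqrt (2 * π * σn ^ 2) = Real.sqrt (2 * π) * σn by
    rw [Real.sqrt_mul h2π.le, Real.sqrt_sq hσn.le]]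
  have hq : Real.sqrt (2 * π) ≠ 0 := by positivity
  rw [show ((Real.sqrt (2 * π) * sp)⁻¹ * Real.exp (-(y - μ) ^ 2 / (2 * sp ^ 2)) *
    (sp / σn * ((Real.sqrt (2 * π))⁻¹ *
        Real.exp (-((sp / σn) * s + -(σx * (y - μ) / (sp * σn)) - 0) ^ 2 / (2 * 1)))))
    = ((Real.sqrt (2 * π) * sp)⁻¹ * (sp / σn) * Real.exp (-(y - μ) ^ 2 / (2 * sp ^ 2)) *
      ((Real.sqrt (2 * π))⁻¹ *
        Real.exp (-((sp / σn) * s + -(σx * (y - μ) / (sp * σn)) - 0) ^ 2 / (2 * 1)))) by ring]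
  apply mul_exp_helper
  · field_simp
  · field_simp
    linear_combination ((y - μ)^2 - sp^2*s^2) * hsp2

lemma stdPdf_pos (t : ℝ) : 0 < stdPdf t := by
  unfold stdPdf gauss
  positivity

lemma integrable_stdPdf : Integrable stdPdf := integrable_gauss 0 1 one_pos

lemma integral_stdPdf : ∫ t, stdPdf t = 1 := integral_gauss 0 1 one_pos

lemma stdCdf_nonneg (t : ℝ) : 0 ≤ stdCdf t :=
  integral_nonneg fun u => (stdPdf_pos u).le

lemma stdCdf_le_one (t : ℝ) : stdCdf t ≤ 1 := by
  rw [← integral_stdPdf]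
  exact setIntegral_le_integral integrable_stdPdf (Eventually.of_forall fun u => (stdPdf_pos u).le)

lemma stdCdf_pos (t : ℝ) : 0 < stdCdf t := by
  rw [stdCdf, setIntegral_pos_iff_support_of_nonneg_ae
    (Eventually.of_forall fun u => (stdPdf_pos u).le) integrable_stdPdf.integrableOn]
  have : Function.support stdPdf = Set.univ := by
    ext u; simp [Function.mem_support, (stdPdf_pos u).ne']
  rw [this, Set.univ_inter, Real.volume_Iic]
  exact ENNReal.zero_lt_top

lemma stdCdf_mono : Monotone stdCdf := by
  intro s t hst
  exact setIntegral_mono_set integrable_stdPdf.integrableOn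
    (Eventually.of_forall fun u => (stdPdf_pos u).le)
    (HasSubset.Subset.eventuallyLE (Set.Iic_subset_Iic.mpr hst))

lemma stdCdf_affine (a d t : ℝ) (ha : 0 < a) :
    stdCdf (a * t + d) = ∫ s in Set.Iic t, a * stdPdf (a * s + d) := by
  have key : ∀ s : ℝ, Set.indicator (Set.Iic t) (fun s => a * stdPdf (a * s + d)) s
      = a * Set.indicator (Set.Iic (a * t + d)) stdPdf (a * s + d) := by
    intro s
    by_cases hs : s ≤ t
    · rw [Set.indicator_of_mem (Set.mem_Iic.mpr hs),
        Set.indicator_of_mem (Set.mem_Iic.mpr (by nlinarith))]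
    · rw [Set.indicator_of_notMem (by simpa using hs),
        Set.indicator_of_notMem (by simp; nlinarith [lt_of_not_ge hs]), mul_zero]
  rw [← integral_indicator measurableSet_Iic]
  simp_rw [key]
  rw [integral_const_mul]
  set F : ℝ → ℝ := Set.indicator (Set.Iic (a * t + d)) stdPdf with hF
  have h1 : (∫ s : ℝ, F (a * s + d)) = |a⁻¹| • ∫ x, F x := by
    rw [← integral_add_right_eq_self F d]
    exact MeasureTheory.Measure.integral_comp_mul_left (fun x => F (x + d)) a
  rw [h1, hF, integral_indicator measurableSet_Iic]
  rw [abs_of_pos (inv_pos.mpr ha), smul_eq_mul, ← mul_assoc, mul_inv_cancel₀ ha.ne', one_mul]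
  rfl


set_option maxHeartbeats 1000000 in
theorem stmt_11 (μ σx σn fstar : ℝ) (hσx : 0 < σx) (hσn : 0 < σn) :
    (∫ y : ℝ, gauss μ (σx ^ 2 + σn ^ 2) y *
        (stdCdf (((σx ^ 2 + σn ^ 2) * fstar - σn ^ 2 * μ - σx ^ 2 * y) /
            (σx * σn * Real.sqrt (σx ^ 2 + σn ^ 2))) /
          stdCdf ((fstar - μ) / σx))) = 1 := by
  have hv0 : (0:ℝ) < σx ^ 2 + σn ^ 2 := by positivity
  set sp := Real.sqrt (σx ^ 2 + σn ^ 2) with hspdef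
  have hsp : 0 < sp := Real.sqrt_pos.mpr hv0
  have hsp2 : sp ^ 2 = σx ^ 2 + σn ^ 2 := Real.sq_sqrt hv0.le
  set h := (fstar - μ) / σx with hh
  set a := sp / σn with hadef
  have ha0 : 0 < a := by positivity
  have hgy : ∀ y : ℝ, ((σx ^ 2 + σn ^ 2) * fstar - σn ^ 2 * μ - σx ^ 2 * y) / (σx * σn * sp)
      = a * h + -(σx * (y - μ) / (sp * σn)) := by
    intro y
    rw [hadef, hh]
    field_simp
    linear_combination (μ - fstar) * hsp2
  set f : ℝ → ℝ → ℝ := fun y s =>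
    Set.indicator (Set.Iic h) (fun s => stdPdf s * gauss (μ + σx * s) (σn ^ 2) y) s with hf
  have step1 : ∀ y : ℝ, gauss μ (σx ^ 2 + σn ^ 2) y *
      stdCdf (((σx ^ 2 + σn ^ 2) * fstar - σn ^ 2 * μ - σx ^ 2 * y) / (σx * σn * sp))
      = ∫ s, f y s := by
    intro y
    rw [hgy y, stdCdf_affine a (-(σx * (y - μ) / (sp * σn))) h ha0,
      ← integral_indicator measurableSet_Iic, ← integral_const_mul]
    congr 1
    funext s
    by_cases hs : s ∈ Set.Iic h
    · rw [hf]
      simp only [Set.indicator_of_mem hs]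
      exact key_identity μ σx σn sp s y hσx hσn hsp hsp2
    · rw [hf]
      simp only [Set.indicator_of_notMem hs, mul_zero]
  have hcontF : Continuous (fun p : ℝ × ℝ => stdPdf p.2 * gauss (μ + σx * p.2) (σn ^ 2) p.1) := by
    unfold stdPdf gauss
    fun_prop
  have hmeas : AEStronglyMeasurable (Function.uncurry f) ((volume : Measure ℝ).prod volume) := by
    have huf : Function.uncurry f = Set.indicator {p : ℝ × ℝ | p.2 ∈ Set.Iic h}
        (fun p => stdPdf p.2 * gauss (μ + σx * p.2) (σn ^ 2) p.1) := by
      funext p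
      by_cases hp : p.2 ∈ Set.Iic h
      · simp [Function.uncurry, hf, Set.indicator, hp]
      · simp [Function.uncurry, hf, Set.indicator, hp]
    rw [huf]
    exact (hcontF.measurable.indicator
      (measurable_snd measurableSet_Iic)).aestronglyMeasurable
  have hfnonneg : ∀ y s, 0 ≤ f y s := by
    intro y s
    rw [hf]
    apply Set.indicator_nonneg
    intro s _
    exact mul_nonneg (stdPdf_pos s).le (gauss_nonneg _ _ _)
  have hπn : (0:ℝ) < 2 * Real.pi * σn ^ 2 := by positivity
  have hint : Integrable (Function.uncurry f) ((volume : Measure ℝ).prod volume) := by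
    rw [integrable_prod_iff hmeas]
    constructor
    · apply ae_of_all
      intro y
      apply Integrable.mono (integrable_stdPdf.const_mul ((Real.sqrt (2 * Real.pi * σn ^ 2))⁻¹))
      · have hc : Continuous (fun s : ℝ => stdPdf s * gauss (μ + σx * s) (σn ^ 2) y) := by
          unfold stdPdf gauss; fun_prop
        exact (hc.measurable.indicator measurableSet_Iic).aestronglyMeasurable
      · apply ae_of_all
        intro s
        rw [show Function.uncurry f (y, s) = f y s from rfl,
          Real.norm_of_nonneg (hfnonneg y s), Real.norm_of_nonneg
          (mul_nonneg (by positivity) (stdPdf_pos s).le)]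
        have hg : gauss (μ + σx * s) (σn ^ 2) y ≤ (Real.sqrt (2 * Real.pi * σn ^ 2))⁻¹ := by
          unfold gauss
          have h1 : Real.exp (-(y - (μ + σx * s)) ^ 2 / (2 * σn ^ 2)) ≤ 1 := by
            rw [Real.exp_le_one_iff]
            apply div_nonpos_of_nonpos_of_nonneg <;> nlinarith [sq_nonneg (y - (μ + σx * s))]
          calc (Real.sqrt (2 * Real.pi * σn ^ 2))⁻¹ * Real.exp (-(y - (μ + σx * s)) ^ 2 / (2 * σn ^ 2))
              ≤ (Real.sqrt (2 * Real.pi * σn ^ 2))⁻¹ * 1 := by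
                apply mul_le_mul_of_nonneg_left h1 (by positivity)
            _ = (Real.sqrt (2 * Real.pi * σn ^ 2))⁻¹ := mul_one _
        calc f y s ≤ stdPdf s * gauss (μ + σx * s) (σn ^ 2) y := by
              rw [hf]
              exact Set.indicator_le_self' (fun u _ =>
                mul_nonneg (stdPdf_pos u).le (gauss_nonneg _ _ _)) s
          _ ≤ (Real.sqrt (2 * Real.pi * σn ^ 2))⁻¹ * stdPdf s := by
              rw [mul_comm]
              exact mul_le_mul_of_nonneg_right hg (stdPdf_pos s).le
    · have heq : (fun y => ∫ s, ‖Function.uncurry f (y, s)‖) = fun y => gauss μ (σx ^ 2 + σn ^ 2) y *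
          stdCdf (((σx ^ 2 + σn ^ 2) * fstar - σn ^ 2 * μ - σx ^ 2 * y) / (σx * σn * sp)) := by
        funext y
        have : (∫ s, ‖Function.uncurry f (y, s)‖) = ∫ s, f y s := by
          congr 1; funext s; exact Real.norm_of_nonneg (hfnonneg y s)
        rw [this, ← step1 y]
      rw [heq]
      apply Integrable.mono (integrable_gauss μ _ hv0)
      · have m1 : Measurable (fun y : ℝ => gauss μ (σx ^ 2 + σn ^ 2) y) := by
          unfold gauss; fun_prop
        have m2 : Measurable (fun y : ℝ =>
            stdCdf (((σx ^ 2 + σn ^ 2) * fstar - σn ^ 2 * μ - σx ^ 2 * y) / (σx * σn * sp))) :=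
          stdCdf_mono.measurable.comp (by fun_prop)
        exact (m1.mul m2).aestronglyMeasurable
      · apply ae_of_all
        intro y
        rw [Real.norm_of_nonneg (mul_nonneg (gauss_nonneg _ _ _) (stdCdf_nonneg _)),
          Real.norm_of_nonneg (gauss_nonneg _ _ _)]
        exact mul_le_of_le_one_right (gauss_nonneg _ _ _) (stdCdf_le_one _)
  have hmain : (∫ y, gauss μ (σx ^ 2 + σn ^ 2) y *
      stdCdf (((σx ^ 2 + σn ^ 2) * fstar - σn ^ 2 * μ - σx ^ 2 * y) / (σx * σn * sp)))
      = stdCdf h := by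
    calc (∫ y, gauss μ (σx ^ 2 + σn ^ 2) y *
        stdCdf (((σx ^ 2 + σn ^ 2) * fstar - σn ^ 2 * μ - σx ^ 2 * y) / (σx * σn * sp)))
        = ∫ y, ∫ s, f y s := by congr 1; funext y; exact step1 y
      _ = ∫ s, ∫ y, f y s := integral_integral_swap hint
      _ = ∫ s, Set.indicator (Set.Iic h) stdPdf s := by
          congr 1
          funext s
          by_cases hs : s ∈ Set.Iic h
          · rw [hf]
            simp only [Set.indicator_of_mem hs]
            rw [integral_const_mul, integral_gauss _ _ (by positivity), mul_one]
          · rw [hf]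
            simp only [Set.indicator_of_notMem hs]
            exact integral_zero _ _
      _ = stdCdf h := by rw [integral_indicator measurableSet_Iic]; rfl
  calc (∫ y : ℝ, gauss μ (σx ^ 2 + σn ^ 2) y *
        (stdCdf (((σx ^ 2 + σn ^ 2) * fstar - σn ^ 2 * μ - σx ^ 2 * y) / (σx * σn * sp)) /
          stdCdf h))
      = (∫ y : ℝ, gauss μ (σx ^ 2 + σn ^ 2) y *
          stdCdf (((σx ^ 2 + σn ^ 2) * fstar - σn ^ 2 * μ - σx ^ 2 * y) / (σx * σn * sp))) *
        (stdCdf h)⁻¹ := by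
        rw [← integral_mul_const]
        congr 1
        funext y
        ring
    _ = 1 := by rw [hmain, mul_inv_cancel₀ (stdCdf_pos h).ne']
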